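/- Let q > 1 be an odd integer and set e = 2(q−1). Then gcd(q,e) = 1, ord_e(q) = 2, and m(q,e) = q−1 = e/2 = ⌈e / ord_e(q)⌉. -/

import Mathlib

def SumPowSet (q e : ℕ) : Set ℕ :=
  {t | 0 < t ∧ ∃ a : Fin t → ℕ, e ∣ ∑ i, q ^ a i}

def OrdSet (q e : ℕ) : Set ℕ :=
  {s | 0 < s ∧ q ^ s ≡ 1 [MOD e]}

lemma sum_modEq_aux {ι : Type*} (s : Finset ι) (f g : ι → ℕ) (n : ℕ)
    (h : ∀ i ∈ s, f i ≡ g i [MOD n]) : (∑ i ∈ s, f i) ≡ (∑ i ∈ s, g i) [MOD n] := by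
  classical
  induction s using Finset.induction with
  | empty => simp [Nat.ModEq.refl]
  | insert _ _ hx ih =>
    rw [Finset.sum_insert hx, Finset.sum_insert hx]
    exact Nat.ModEq.add (h _ (Finset.mem_insert_self _ _))
      (ih fun i hi => h i (Finset.mem_insert_of_mem hi))

theorem stmt_10 (q : ℕ) (hq : 1 < q) (hodd : Odd q) (e : ℕ) (he : e = 2 * (q - 1)) :
    Nat.Coprime q e ∧ IsLeast (OrdSet q e) 2 ∧ IsLeast (SumPowSet q e) (q - 1) ∧
      q - 1 = e / 2 ∧ e / 2 = (e + 2 - 1) / 2 := by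
  obtain ⟨m, hm⟩ := hodd
  have hq1 : 1 ≤ q - 1 := by omega
  refine ⟨?_, ⟨⟨by norm_num, ?_⟩, ?_⟩, ⟨⟨by omega, ?_⟩, ?_⟩, by omega, by omega⟩
  · -- coprime
    subst he
    rw [Nat.coprime_mul_iff_right]
    constructor
    · exact Nat.coprime_two_right.mpr ⟨m, hm⟩
    · have h : q = (q - 1) + 1 := by omega
      rw [h]; exact Nat.coprime_self_add_left.mpr (Nat.coprime_one_left _)
  · -- q^2 ≡ 1 [MOD e]
    have h1 : (1 : ℕ) ≤ q ^ 2 := Nat.one_le_pow _ _ (by omega)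
    rw [Nat.ModEq.comm, Nat.modEq_iff_dvd' h1]
    have : q ^ 2 - 1 = 2 * (q - 1) * (m + 1) := by
      subst hm
      have h2 : (2*m+1)^2 = 4*(m^2)+4*m+1 := by ring
      have h3 : 2*(2*m+1-1)*(m+1) = 4*(m^2)+4*m := by rw [show 2*m+1-1 = 2*m from rfl]; ring
      omega
    rw [this, he]; exact Dvd.intro _ rfl
  · -- lower bound for OrdSet
    rintro s ⟨hs0, hs⟩
    by_contra hlt
    push_neg at hlt
    interval_cases s
    rw [pow_one, Nat.ModEq.comm, Nat.modEq_iff_dvd' (by omega)] at hs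
    have := Nat.le_of_dvd (by omega) hs
    omega
  · -- membership in SumPowSet
    refine ⟨fun i : Fin (q - 1) => if i = ⟨0, by omega⟩ then 1 else 0, ?_⟩
    have hsum : (∑ i : Fin (q - 1), q ^ (if i = (⟨0, by omega⟩ : Fin (q - 1)) then 1 else 0))
        = 2 * (q - 1) := by
      have h1 : ∀ i : Fin (q - 1),
          q ^ (if i = (⟨0, by omega⟩ : Fin (q - 1)) then 1 else 0)
            = (if i = (⟨0, by omega⟩ : Fin (q - 1)) then q - 1 else 0) + 1 := by
        intro i; split <;> simp <;> omega
      rw [Finset.sum_congr rfl (fun i _ => h1 i), Finset.sum_add_distrib,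
        Finset.sum_ite_eq' Finset.univ _ (fun _ => q - 1)]
      simp
      omega
    rw [hsum, he]
  · -- lower bound for SumPowSet
    rintro t ⟨ht0, a, ha⟩
    have hdvd : (q - 1) ∣ ∑ i, q ^ a i := dvd_trans (by rw [he]; exact Dvd.intro_left 2 rfl) ha
    have hmod : (∑ i : Fin t, q ^ a i) ≡ (∑ _i : Fin t, 1) [MOD q - 1] := by
      apply sum_modEq_aux
      intro i _
      have hq' : q ≡ 1 [MOD q - 1] := by
        rw [Nat.ModEq.comm, Nat.modEq_iff_dvd' (by omega)]
      simpa using hq'.pow (a i)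
    simp only [Finset.sum_const, Finset.card_univ, Fintype.card_fin, smul_eq_mul, mul_one] at hmod
    have : (q - 1) ∣ t := (Nat.modEq_zero_iff_dvd.mp
      ((hmod.symm.trans ((Nat.modEq_zero_iff_dvd.mpr hdvd)))))
    exact Nat.le_of_dvd ht0 this
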